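/- Let V : ℝ → ℝ^N be differentiable with derivative V'(t), let p : ℝ → ℝ^P, and suppose for all t: (i) M V(t) = 0 (discrete divergence-free constraint) and (ii) Ω V'(t) = −C̃(V(t)) V(t) + ν D V(t) − G p(t) (semi-discrete momentum equation without body forces). Then the discrete kinetic energy K_h(t) := ½ V(t)ᵀ Ω V(t) satisfies, at every t, d/dt K_h(t) = −ν ‖Q V(t)‖², where ‖·‖ is the Euclidean norm. In particular the kinetic energy is nonincreasing for ν ≥ 0 and exactly conserved for ν = 0. -/

import Mathlib

open Matrix

lemma skew_quad {n : ℕ} (A : Matrix (Fin n) (Fin n) ℝ) (h : Aᵀ = -A) (w : Fin n → ℝ) :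
    w ⬝ᵥ (A *ᵥ w) = 0 := by
  have h1 : w ⬝ᵥ (A *ᵥ w) = (Aᵀ *ᵥ w) ⬝ᵥ w := by
    rw [Matrix.dotProduct_mulVec, ← Matrix.mulVec_transpose]
  rw [h] at h1
  simp only [Matrix.neg_mulVec, neg_dotProduct, dotProduct_neg, dotProduct_comm] at h1
  linarith

theorem semidiscrete_energy_equation
    (N P NQ : ℕ)
    (Ω : Matrix (Fin N) (Fin N) ℝ) (hΩdiag : Ω.IsDiag) (hΩpos : ∀ i, 0 < Ω i i)
    (M : Matrix (Fin P) (Fin N) ℝ) (G : Matrix (Fin N) (Fin P) ℝ) (hG : G = -Mᵀ)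
    (C : (Fin N → ℝ) → Matrix (Fin N) (Fin N) ℝ)
    (hC : ∀ w : Fin N → ℝ, (C w)ᵀ = -(C w))
    (Q : Matrix (Fin NQ) (Fin N) ℝ) (D : Matrix (Fin N) (Fin N) ℝ)
    (hD : D = -(Qᵀ * Q))
    (ν : ℝ) (hν : 0 ≤ ν)
    (V V' : ℝ → Fin N → ℝ) (p : ℝ → Fin P → ℝ)
    (hV : ∀ t, HasDerivAt V (V' t) t)
    (hdiv : ∀ t, M *ᵥ V t = 0)
    (hmom : ∀ t, Ω *ᵥ V' t = -(C (V t) *ᵥ V t) + ν • (D *ᵥ V t) - G *ᵥ p t) :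
    ∀ t, HasDerivAt (fun s => (1/2) * (V s ⬝ᵥ (Ω *ᵥ V s)))
      (-ν * ((Q *ᵥ V t) ⬝ᵥ (Q *ᵥ V t))) t := by
  intro t
  have hVi : ∀ i, HasDerivAt (fun s => V s i) (V' t i) t :=
    (hasDerivAt_pi.mp (hV t))
  have hderiv : HasDerivAt (fun s => (1/2) * (V s ⬝ᵥ (Ω *ᵥ V s)))
      ((1/2) * (V' t ⬝ᵥ (Ω *ᵥ V t) + V t ⬝ᵥ (Ω *ᵥ V' t))) t := by
    have h : HasDerivAt (fun s => V s ⬝ᵥ (Ω *ᵥ V s))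
        (V' t ⬝ᵥ (Ω *ᵥ V t) + V t ⬝ᵥ (Ω *ᵥ V' t)) t := by
      simp only [dotProduct, Matrix.mulVec]
      rw [← Finset.sum_add_distrib]
      apply HasDerivAt.fun_sum
      intro i _
      have h1 : HasDerivAt (fun s => (dotProduct (Ω i) (V s) : ℝ))
          (dotProduct (Ω i) (V' t)) t := by
        simp only [dotProduct]
        apply HasDerivAt.fun_sum
        intro j _
        exact (hVi j).const_mul (Ω i j)
      simpa [dotProduct] using (hVi i).fun_mul h1
    exact h.const_mul (1/2)
  convert hderiv using 1
  have hΩsymm : Ωᵀ = Ω := hΩdiag.isSymm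
  have hsymm : V' t ⬝ᵥ (Ω *ᵥ V t) = V t ⬝ᵥ (Ω *ᵥ V' t) := by
    rw [Matrix.dotProduct_mulVec, ← Matrix.mulVec_transpose, hΩsymm, dotProduct_comm]
  rw [hsymm]
  have key : V t ⬝ᵥ (Ω *ᵥ V' t) = -ν * ((Q *ᵥ V t) ⬝ᵥ (Q *ᵥ V t)) := by
    rw [hmom t, hG, hD]
    have hconv : V t ⬝ᵥ (C (V t) *ᵥ V t) = 0 := skew_quad _ (hC (V t)) (V t)
    have hpres : V t ⬝ᵥ (Mᵀ *ᵥ p t) = 0 := by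
      rw [Matrix.dotProduct_mulVec, ← Matrix.mulVec_transpose, Matrix.transpose_transpose,
        hdiv t]
      simp
    have hdiff : V t ⬝ᵥ ((Qᵀ * Q) *ᵥ V t) = (Q *ᵥ V t) ⬝ᵥ (Q *ᵥ V t) := by
      rw [← Matrix.mulVec_mulVec, Matrix.dotProduct_mulVec, ← Matrix.mulVec_transpose,
        Matrix.transpose_transpose]
    simp only [Matrix.neg_mulVec, Matrix.smul_mulVec, dotProduct_add,
      dotProduct_sub, dotProduct_neg, dotProduct_smul,
      smul_neg, smul_eq_mul]
    rw [hconv, hpres, hdiff]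
    ring
  rw [key]; ring
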